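/- Let D(z,λ) = h₀(λ) + ∑_{i=1}^d (z_i + z_i⁻¹)·h_i(λ) be a minimally sparse dispersion polynomial. Assume: for every corner point x ∈ {−1,1}^d and every λ₀ ∈ ℂ with D(x,λ₀) = 0, one has h_i(λ₀) ≠ 0 for every i = 1,…,d. Then every critical point (x,λ₀) of D has x a corner point, and at every such critical point the Hessian matrix (∂²D/∂z_i∂z_j(x,λ₀))_{i,j} is an invertible diagonal matrix (with diagonal entries 2·x_i·h_i(λ₀) ≠ 0). -/
import Mathlib


/-- The minimally sparse dispersion polynomial
`D(z,λ) = h₀(λ) + ∑_{i=1}^d (z_i + z_i⁻¹)·h_i(λ)`. -/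
noncomputable def Dms (d : ℕ) (h0 : Polynomial ℂ) (h : Fin d → Polynomial ℂ)
    (z : Fin d → ℂ) (lam : ℂ) : ℂ :=
  Polynomial.eval lam h0 + ∑ i, (z i + (z i)⁻¹) * Polynomial.eval lam (h i)

/-- The partial derivative `∂D/∂z_i`. -/
noncomputable def DmsPD (d : ℕ) (h0 : Polynomial ℂ) (h : Fin d → Polynomial ℂ)
    (i : Fin d) (z : Fin d → ℂ) (lam : ℂ) : ℂ :=
  deriv (fun t => Dms d h0 h (Function.update z i t) lam) (z i)

/-- The second partial derivative `∂²D/∂z_j∂z_i`. -/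
noncomputable def DmsPD2 (d : ℕ) (h0 : Polynomial ℂ) (h : Fin d → Polynomial ℂ)
    (i j : Fin d) (z : Fin d → ℂ) (lam : ℂ) : ℂ :=
  deriv (fun s => DmsPD d h0 h i (Function.update z j s) lam) (z j)

lemma Dms_update (d : ℕ) (h0 : Polynomial ℂ) (h : Fin d → Polynomial ℂ)
    (z : Fin d → ℂ) (i : Fin d) (t lam : ℂ) :
    Dms d h0 h (Function.update z i t) lam =
      (t + t⁻¹) * Polynomial.eval lam (h i) +
        (Polynomial.eval lam h0 +
          ∑ k ∈ Finset.univ.erase i, (z k + (z k)⁻¹) * Polynomial.eval lam (h k)) := by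
  unfold Dms
  have : (fun k => (Function.update z i t k + (Function.update z i t k)⁻¹) *
      Polynomial.eval lam (h k)) =
      Function.update (fun k => (z k + (z k)⁻¹) * Polynomial.eval lam (h k)) i
        ((t + t⁻¹) * Polynomial.eval lam (h i)) := by
    funext k
    by_cases hk : k = i
    · subst hk; simp
    · simp [Function.update_of_ne hk]
  rw [this, Finset.sum_update_of_mem (Finset.mem_univ i),
    show Finset.univ \ {i} = Finset.univ.erase i from by ext k; simp [and_comm]]
  ring

lemma DmsPD_eq (d : ℕ) (h0 : Polynomial ℂ) (h : Fin d → Polynomial ℂ)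
    (i : Fin d) (z : Fin d → ℂ) (lam : ℂ) (hz : z i ≠ 0) :
    DmsPD d h0 h i z lam = (1 - ((z i) ^ 2)⁻¹) * Polynomial.eval lam (h i) := by
  unfold DmsPD
  simp only [Dms_update]
  have hder : HasDerivAt (fun t : ℂ => (t + t⁻¹) * Polynomial.eval lam (h i) +
      (Polynomial.eval lam h0 +
        ∑ k ∈ Finset.univ.erase i, (z k + (z k)⁻¹) * Polynomial.eval lam (h k)))
      ((1 + -((z i) ^ 2)⁻¹) * Polynomial.eval lam (h i)) (z i) :=
    (((hasDerivAt_id (z i)).add (hasDerivAt_inv hz)).mul_const _).add_const _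
  rw [hder.deriv]; ring
lemma DmsPD2_off (d : ℕ) (h0 : Polynomial ℂ) (h : Fin d → Polynomial ℂ)
    (i j : Fin d) (hij : i ≠ j) (z : Fin d → ℂ) (lam : ℂ) (hz : z i ≠ 0) :
    DmsPD2 d h0 h i j z lam = 0 := by
  unfold DmsPD2
  have : (fun s => DmsPD d h0 h i (Function.update z j s) lam) =
      fun _ => (1 - ((z i) ^ 2)⁻¹) * Polynomial.eval lam (h i) := by
    funext s
    rw [DmsPD_eq d h0 h i _ lam (by simpa [Function.update_of_ne hij] using hz)]
    simp [Function.update_of_ne hij]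
  rw [this, deriv_const]

lemma DmsPD2_diag (d : ℕ) (h0 : Polynomial ℂ) (h : Fin d → Polynomial ℂ)
    (i : Fin d) (z : Fin d → ℂ) (lam : ℂ) (hz : z i ≠ 0) (hcorner : (z i) ^ 2 = 1) :
    DmsPD2 d h0 h i i z lam = 2 * z i * Polynomial.eval lam (h i) := by
  unfold DmsPD2
  have hev : (fun s => DmsPD d h0 h i (Function.update z i s) lam) =ᶠ[nhds (z i)]
      fun s => (1 - (s ^ 2)⁻¹) * Polynomial.eval lam (h i) := by
    filter_upwards [isOpen_compl_singleton.mem_nhds (by simpa using hz :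
        z i ∈ ({0}ᶜ : Set ℂ))] with s hs
    rw [DmsPD_eq d h0 h i _ lam (by simpa using hs)]
    simp
  rw [hev.deriv_eq]
  have hder : HasDerivAt (fun s : ℂ => (1 - (s ^ 2)⁻¹) * Polynomial.eval lam (h i))
      ((-(-(↑2 * z i ^ (2 - 1)) / (z i ^ 2) ^ 2)) * Polynomial.eval lam (h i)) (z i) :=
    (((hasDerivAt_pow 2 (z i)).inv (pow_ne_zero 2 hz)).const_sub 1).mul_const _
  rw [hder.deriv, hcorner]
  simp


/-- Suppose that for every corner point `x ∈ {−1,1}^d` and every `λ₀` with `D(x,λ₀) = 0`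
one has `h_i(λ₀) ≠ 0` for every `i`.  Then every critical point `(x,λ₀)` of `D` has `x`
a corner point, and at every critical point the Hessian is an invertible diagonal matrix
with nonzero diagonal entries `2·x_i·h_i(λ₀)`. -/
theorem stmt_4 (d : ℕ) (hd : 1 ≤ d) (h0 : Polynomial ℂ) (h : Fin d → Polynomial ℂ)
    (hgen : ∀ (x : Fin d → ℂ), (∀ i, x i = 1 ∨ x i = -1) → ∀ lam0 : ℂ,
      Dms d h0 h x lam0 = 0 → ∀ i : Fin d, Polynomial.eval lam0 (h i) ≠ 0) :
    ∀ (x : Fin d → ℂ) (lam0 : ℂ), (∀ i, x i ≠ 0) →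
      Dms d h0 h x lam0 = 0 →
      (∀ i, DmsPD d h0 h i x lam0 = 0) →
      -- x is a corner point
      (∀ i, (x i) ^ 2 = 1) ∧
      -- the Hessian is the diagonal matrix with nonzero entries 2·x_i·h_i(λ₀)
      (Matrix.of (fun i j : Fin d => DmsPD2 d h0 h i j x lam0)
        = Matrix.diagonal (fun i => 2 * x i * Polynomial.eval lam0 (h i))) ∧
      (∀ i : Fin d, 2 * x i * Polynomial.eval lam0 (h i) ≠ 0) ∧
      IsUnit (Matrix.of (fun i j : Fin d => DmsPD2 d h0 h i j x lam0)) := by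
  intro x lam0 hx hD hcrit
  -- critical equations
  have hcrit' : ∀ i, (1 - ((x i) ^ 2)⁻¹) * Polynomial.eval lam0 (h i) = 0 := by
    intro i; rw [← DmsPD_eq d h0 h i x lam0 (hx i)]; exact hcrit i
  -- if x i ^ 2 ≠ 1 then h i vanishes at lam0
  have hvanish : ∀ i, (x i) ^ 2 ≠ 1 → Polynomial.eval lam0 (h i) = 0 := by
    intro i hne
    have h1 : (1 - ((x i) ^ 2)⁻¹) ≠ 0 := by
      intro hc
      apply hne
      have : ((x i) ^ 2)⁻¹ = 1 := by linear_combination -hc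
      rwa [inv_eq_one] at this
    exact (mul_eq_zero.mp (hcrit' i)).resolve_left h1
  -- corner replacement
  set x' : Fin d → ℂ := fun j => if (x j) ^ 2 = 1 then x j else 1 with hx'
  have hx'corner : ∀ j, x' j = 1 ∨ x' j = -1 := by
    intro j
    by_cases hj : (x j) ^ 2 = 1
    · have hxx : x j * x j = 1 := by rw [← sq]; exact hj
      have hx'j : x' j = x j := if_pos hj
      rw [hx'j]
      exact mul_self_eq_one_iff.mp hxx
    · left; exact if_neg hj
  have hDx' : Dms d h0 h x' lam0 = 0 := by
    rw [← hD]
    unfold Dms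
    congr 1
    apply Finset.sum_congr rfl
    intro j _
    by_cases hj : (x j) ^ 2 = 1
    · have hx'j : x' j = x j := if_pos hj
      rw [hx'j]
    · rw [hvanish j hj]; ring
  have hne : ∀ i, Polynomial.eval lam0 (h i) ≠ 0 := hgen x' hx'corner lam0 hDx'
  have hcorner : ∀ i, (x i) ^ 2 = 1 := by
    intro i
    by_contra hc
    exact hne i (hvanish i hc)
  refine ⟨hcorner, ?_, ?_, ?_⟩
  · ext i j
    by_cases hij : i = j
    · subst hij
      simp [Matrix.diagonal, DmsPD2_diag d h0 h i x lam0 (hx i) (hcorner i)]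
    · simp [Matrix.diagonal, hij, DmsPD2_off d h0 h i j hij x lam0 (hx i)]
  · intro i
    exact mul_ne_zero (mul_ne_zero two_ne_zero (hx i)) (hne i)
  · rw [show (Matrix.of (fun i j : Fin d => DmsPD2 d h0 h i j x lam0))
        = Matrix.diagonal (fun i => 2 * x i * Polynomial.eval lam0 (h i)) from ?_]
    · rw [Matrix.isUnit_iff_isUnit_det, Matrix.det_diagonal]
      rw [isUnit_iff_ne_zero]
      exact Finset.prod_ne_zero_iff.mpr fun i _ =>
        mul_ne_zero (mul_ne_zero two_ne_zero (hx i)) (hne i)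
    · ext i j
      by_cases hij : i = j
      · subst hij
        simp [Matrix.diagonal, DmsPD2_diag d h0 h i x lam0 (hx i) (hcorner i)]
      · simp [Matrix.diagonal, hij, DmsPD2_off d h0 h i j hij x lam0 (hx i)]
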